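/- In any algebra A in I₂,₀, if 0 ⊑ a and 0 ⊑ b (i.e., (0 → a')' = 0 and (0 → b')' = 0), then 0 ⊑ a → b (i.e., (0 → (a → b)')' = 0). -/

import Mathlib

theorem stmt_18 (A : Type*) (i : A → A → A) (z : A)
    (hI : ∀ x y w : A, i (i x y) w = i (i (i (i w z) x) (i (i y w) z)) z)
    (hI0 : i (i z z) z = z)
    (h2 : ∀ x : A, i (i x z) z = x)
    (a b : A) (h0a : i (i z (i a z)) z = z) (h0b : i (i z (i b z)) z = z) :
    i (i z (i (i a b) z)) z = z := by
  -- key quasi-identity: 0 → c' = 0' → 0 → c = 0'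
  have key : ∀ c : A, i z (i c z) = i z z → i z c = i z z := by
    intro a ha
    have e0 := hI a (i a (i z z)) (i a (i z z))
    have e1 := hI (i z z) z z
    have e2 := hI (i z z) z (i a z)
    have f0 := h2 a
    have f1 := h2 (i (i (i a (i z z)) z) a)
    have f2 := h2 (i (i (i a z) z) (i z z))
    have f3 := h2 (i (i a (i a (i z z))) (i a (i z z)))
    grind
  have ha' : i z (i a z) = i z z := by
    conv_lhs => rw [← h2 (i z (i a z)), h0a]
  have hb' : i z (i b z) = i z z := by
    conv_lhs => rw [← h2 (i z (i b z)), h0b]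
  have ka := key a ha'
  have kb := key b hb'
  -- sub-goal: 0 → (a → b) = 0'
  have sub : i z (i a b) = i z z := by
    have g0 := hI (i z b) z (i (i z b) z)
    have g1 := hI (i z b) z (i (i a z) z)
    have g2 := hI (i a z) z (i (i b z) z)
    have g3 := hI (i a b) (i z b) (i z (i b z))
    have g4 := hI (i b z) (i a z) (i z (i b z))
    have m0 := h2 b
    have m1 := h2 a
    have m2 := h2 (i z (i a b))
    have m3 := h2 (i (i (i (i b z) z) z) (i a z))
    have m4 := h2 (i (i (i (i (i a z) z) z) (i z b)) (i (i z (i (i a z) z)) z))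
    have m5 := h2 (i (i (i z b) (i z (i b z))) z)
    grind
  -- apply key with c := (a→b)'
  have fin : i z (i (i a b) z) = i z z := by
    apply key
    rw [h2 (i a b)]; exact sub
  rw [fin, hI0]
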